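/- Let d ≥ 1 and let C̲, C̄, σ̲, σ̄ > 0. Define δ_σ(ε) = ε^{−d/2} exp(−1/(2σ²ε)) for ε > 0 and ε₀ = min( inf{ε > 0 : δ_σ̄(ε) = 1/2}, 1, (σ̄² d)^{−1} ). Then there exists a constant C > 0, depending only on d, C̲, C̄, σ̲, σ̄, with the following property. Let t₀ ∈ ℝ, x₀ ∈ ℝ^d, R ∈ (0, 1/4], ε ∈ (0, ε₀/2], and let p : (t₀ − εR², ∞) × ℝ^d → ℝ be any function satisfying the two-sided Gaussian bound C̲ s^{−d/2} e^{−|x−x₀|²/(2σ̲² s)} ≤ p(t,x) ≤ C̄ s^{−d/2} e^{−|x−x₀|²/(2σ̄² s)} with s = t − (t₀ − εR²), for all t > t₀ − εR² and x ∈ ℝ^d. Then for all (t,x) with t₀ ≤ t ≤ t₀ + 4R² and |x − x₀| ≤ 4R: (i) p(t,x) ≤ C R^{−d} whenever it is not the case that both t ≤ t₀ + R²/4 and |x − x₀| ≤ R/2; (ii) p(t,x) ≥ C^{−1} R^{−d} δ_{σ̲/4}(ε₀/2 + ε) whenever t ≥ t₀ + ε₀R²/2; (iii) p(t,x) ≤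 C R^{−d} δ_{σ̄}(ε₀/2 + ε) whenever t < t₀ + ε₀R²/2 and |x − x₀| > R. -/

import Mathlib

open scoped Classical

lemma aux_exp_bound (d : ℕ) {c u : ℝ} (hc : 0 < c) (hu : 0 < u) :
    Real.exp (-(c/u)) ≤ (d.factorial : ℝ) * (u/c)^d := by
  have h := Real.pow_div_factorial_le_exp (x := c/u) (by positivity) d
  have h2 : (0:ℝ) < (c/u)^d / (d.factorial : ℝ) := by positivity
  calc Real.exp (-(c/u)) = (Real.exp (c/u))⁻¹ := Real.exp_neg _
    _ ≤ ((c/u)^d / (d.factorial : ℝ))⁻¹ := inv_anti₀ h2 h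
    _ = (d.factorial : ℝ) * (u/c)^d := by
        rw [div_pow, div_pow]
        have : (d.factorial : ℝ) ≠ 0 := by positivity
        field_simp

lemma aux_mono (d : ℕ) {a s s' : ℝ} (hs : 0 < s) (hss' : s ≤ s') (h : (d:ℝ)/2 * s' ≤ a) :
    s ^ (-(d:ℝ)/2) * Real.exp (-(a/s)) ≤ s' ^ (-(d:ℝ)/2) * Real.exp (-(a/s')) := by
  have hs' : 0 < s' := lt_of_lt_of_le hs hss'
  rw [← Real.log_le_log_iff (by positivity) (by positivity)]
  rw [Real.log_mul (by positivity) (Real.exp_ne_zero _),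
      Real.log_mul (by positivity) (Real.exp_ne_zero _),
      Real.log_exp, Real.log_exp, Real.log_rpow hs, Real.log_rpow hs']
  have hlog : Real.log s' - Real.log s ≤ (s' - s)/s := by
    have h1 := Real.log_le_sub_one_of_pos (x := s'/s) (by positivity)
    rw [Real.log_div (ne_of_gt hs') (ne_of_gt hs)] at h1
    have h2 : s'/s - 1 = (s'-s)/s := by field_simp
    linarith [h2 ▸ h1]
  have key : (d:ℝ)/2 * ((s'-s)/s) ≤ a/s - a/s' := by
    rw [div_sub_div _ _ (ne_of_gt hs) (ne_of_gt hs'), mul_div_assoc']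
    rw [div_le_div_iff₀ hs (by positivity)]
    nlinarith [mul_le_mul_of_nonneg_right h (mul_nonneg (sub_nonneg.2 hss') hs.le)]
  have hD : (0:ℝ) ≤ (d:ℝ)/2 := by positivity
  nlinarith [mul_le_mul_of_nonneg_left hlog hD]

lemma aux_S (d : ℕ) (hd : 1 ≤ d) {σ : ℝ} (hσ : 0 < σ) {ε : ℝ} (hε : 0 < ε)
    (hδ : ε ^ (-(d:ℝ)/2) * Real.exp (-1/(2*σ^2*ε)) = 1/2) :
    min 1 (((2*((d.factorial : ℝ)*(2*σ^2)^d))⁻¹)^2) ≤ ε := by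
  set K : ℝ := (d.factorial : ℝ)*(2*σ^2)^d with hK
  have hK0 : 0 < K := by positivity
  rcases le_or_gt 1 ε with h1 | h1
  · calc min 1 (((2*K)⁻¹)^2) ≤ 1 := min_le_left _ _
      _ ≤ ε := h1
  · refine le_trans (min_le_right _ _) ?_
    set c : ℝ := (2*σ^2)⁻¹ with hc
    have hc0 : 0 < c := by positivity
    have harg : -1/(2*σ^2*ε) = -(c/ε) := by
      rw [hc]; field_simp
    have hexp : Real.exp (-1/(2*σ^2*ε)) ≤ (d.factorial : ℝ) * (ε/c)^d := by
      rw [harg]; exact aux_exp_bound d hc0 hε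
    have hεc : (ε/c)^d = (2*σ^2)^d * ε^d := by
      rw [div_pow, hc, inv_pow]; field_simp
    have hmain : (1:ℝ)/2 ≤ K * ε ^ ((d:ℝ)/2) := by
      have hstep : ε ^ (-(d:ℝ)/2) * Real.exp (-1/(2*σ^2*ε))
          ≤ ε ^ (-(d:ℝ)/2) * ((d.factorial : ℝ) * ((2*σ^2)^d * ε^d)) := by
        rw [← hεc]
        exact mul_le_mul_of_nonneg_left hexp (Real.rpow_nonneg hε.le _)
      rw [hδ] at hstep
      refine hstep.trans (le_of_eq ?_)
      rw [show ε ^ (-(d:ℝ)/2) * ((d.factorial : ℝ) * ((2*σ^2)^d * ε^d))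
          = K * (ε ^ (-(d:ℝ)/2) * ε^d) by ring]
      congr 1
      rw [← Real.rpow_natCast ε d, ← Real.rpow_add hε]
      congr 1; ring
    have hhalf : ε ^ ((d:ℝ)/2) ≤ ε ^ ((1:ℝ)/2) := by
      apply Real.rpow_le_rpow_of_exponent_ge hε h1.le
      have : (1:ℝ) ≤ (d:ℝ) := by exact_mod_cast hd
      linarith
    have h2 : (2*K)⁻¹ ≤ ε ^ ((1:ℝ)/2) := by
      have := hmain.trans (mul_le_mul_of_nonneg_left hhalf hK0.le)
      rw [inv_le_iff_one_le_mul₀ (by positivity)]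
      nlinarith
    calc ((2*K)⁻¹)^2 ≤ (ε ^ ((1:ℝ)/2))^2 := by
          apply pow_le_pow_left₀ (by positivity) h2
      _ = ε := by
          rw [← Real.rpow_natCast (ε ^ ((1:ℝ)/2)) 2, ← Real.rpow_mul hε.le]
          norm_num

lemma aux_scale (d : ℕ) {A R : ℝ} (hA : 0 < A) (hR : 0 < R) :
    (A*R^2) ^ (-(d:ℝ)/2) = A ^ (-(d:ℝ)/2) * R ^ (-(d:ℝ)) := by
  rw [Real.mul_rpow hA.le (by positivity)]
  congr 1
  rw [← Real.rpow_natCast R 2, ← Real.rpow_mul hR.le]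
  congr 1
  push_cast; ring

set_option maxHeartbeats 2000000 in
/-- **Pointwise Gaussian transition-density estimates** (Lemma on `p_ε`).
Given two-sided Gaussian bounds with constants `C̲, C̄, σ̲, σ̄` for a kernel `p` started at
`(t₀ - εR², x₀)`, there is a constant `C` depending only on `d, C̲, C̄, σ̲, σ̄` such that, on
the parabolic cylinder `t₀ ≤ t ≤ t₀ + 4R²`, `|x-x₀| ≤ 4R`:
(i) `p ≤ C R^{-d}` off `γ(1/4;1/2)`;
(ii) `p ≥ C⁻¹ R^{-d} δ_{σ̲/4}(ε₀/2+ε)` for `t ≥ t₀ + ε₀R²/2`;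
(iii) `p ≤ C R^{-d} δ_{σ̄}(ε₀/2+ε)` for `t < t₀ + ε₀R²/2`, `|x-x₀| > R`. -/
theorem stmt2 (d : ℕ) (hd : 1 ≤ d) (Cl Cu σl σu : ℝ)
    (hCl : 0 < Cl) (hCu : 0 < Cu) (hσl : 0 < σl) (hσu : 0 < σu) :
    let δ : ℝ → ℝ → ℝ := fun σ ε => ε ^ (-(d:ℝ)/2) * Real.exp (-1/(2*σ^2*ε))
    let S : Set ℝ := {ε | 0 < ε ∧ δ σu ε = 1/2}
    let ε₀ : ℝ := if S.Nonempty then min (sInf S) (min 1 (σu^2*(d:ℝ))⁻¹)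
                  else min 1 (σu^2*(d:ℝ))⁻¹
    ∃ C : ℝ, 0 < C ∧
      ∀ (t₀ : ℝ) (x₀ : EuclideanSpace ℝ (Fin d)) (R ε : ℝ),
        R ∈ Set.Ioc (0:ℝ) (1/4) → ε ∈ Set.Ioc (0:ℝ) (ε₀/2) →
        ∀ p : ℝ → EuclideanSpace ℝ (Fin d) → ℝ,
        (∀ t x, t₀ - ε*R^2 < t →
          Cl * (t - (t₀ - ε*R^2)) ^ (-(d:ℝ)/2) *
              Real.exp (-‖x - x₀‖^2 / (2*σl^2*(t - (t₀ - ε*R^2)))) ≤ p t x ∧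
          p t x ≤ Cu * (t - (t₀ - ε*R^2)) ^ (-(d:ℝ)/2) *
              Real.exp (-‖x - x₀‖^2 / (2*σu^2*(t - (t₀ - ε*R^2))))) →
        ∀ t x, t₀ ≤ t → t ≤ t₀ + 4*R^2 → ‖x - x₀‖ ≤ 4*R →
          (¬(t ≤ t₀ + R^2/4 ∧ ‖x - x₀‖ ≤ R/2) → p t x ≤ C * R ^ (-(d:ℝ))) ∧
          (t₀ + ε₀*R^2/2 ≤ t → C⁻¹ * R ^ (-(d:ℝ)) * δ (σl/4) (ε₀/2 + ε) ≤ p t x) ∧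
          (t < t₀ + ε₀*R^2/2 → R < ‖x - x₀‖ →
            p t x ≤ C * R ^ (-(d:ℝ)) * δ σu (ε₀/2 + ε)) := by
  intro δ S ε₀
  have hd1 : (1:ℝ) ≤ (d:ℝ) := by exact_mod_cast hd
  have hdpos : (0:ℝ) < (d:ℝ) := by linarith
  have hm0 : 0 < min 1 (σu^2*(d:ℝ))⁻¹ := lt_min one_pos (by positivity)
  have hε₀def : ε₀ = if S.Nonempty then min (sInf S) (min 1 (σu^2*(d:ℝ))⁻¹)
                  else min 1 (σu^2*(d:ℝ))⁻¹ := rfl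
  have hε₀m : ε₀ ≤ min 1 (σu^2*(d:ℝ))⁻¹ := by
    rw [hε₀def]; split_ifs with hS
    · exact min_le_right _ _
    · exact le_refl _
  have hε₀pos : 0 < ε₀ := by
    rw [hε₀def]; split_ifs with hS
    · refine lt_min ?_ hm0
      have hb : ∀ y ∈ S, min 1 (((2*((d.factorial : ℝ)*(2*σu^2)^d))⁻¹)^2) ≤ y :=
        fun y hy => aux_S d hd hσu hy.1 hy.2
      have hbpos : 0 < min 1 (((2*((d.factorial : ℝ)*(2*σu^2)^d))⁻¹)^2) :=
        lt_min one_pos (by positivity)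
      exact lt_of_lt_of_le hbpos (le_csInf hS hb)
    · exact hm0
  have hε₀1 : ε₀ ≤ 1 := hε₀m.trans (min_le_left _ _)
  have hε₀d : ε₀ ≤ (σu^2*(d:ℝ))⁻¹ := hε₀m.trans (min_le_right _ _)
  set K1 : ℝ := Cu * max ((4:ℝ)^((d:ℝ)/2)) ((d.factorial:ℝ)*(8*σu^2)^d * 5^((d:ℝ)/2))
    with hK1
  set K2 : ℝ := Cl⁻¹ * 5^((d:ℝ)/2) * (ε₀/2)^(-(d:ℝ)/2) with hK2
  have hK1pos : 0 < K1 := by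
    apply mul_pos hCu
    exact lt_of_lt_of_le (by positivity) (le_max_left _ _)
  have hK2pos : 0 < K2 :=
    mul_pos (mul_pos (by positivity) (by positivity))
      (Real.rpow_pos_of_pos (by linarith) _)
  set C : ℝ := max (max K1 K2) Cu with hC
  have hCK1 : K1 ≤ C := le_trans (le_max_left _ _) (le_max_left _ _)
  have hCK2 : K2 ≤ C := le_trans (le_max_right _ _) (le_max_left _ _)
  have hCCu : Cu ≤ C := le_max_right _ _
  have hC0 : 0 < C := lt_of_lt_of_le hCu hCCu
  refine ⟨C, hC0, ?_⟩
  intro t₀ x₀ R ε hR hε p hp t x ht0 ht4 hx4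
  obtain ⟨hR0, hR4⟩ := hR
  obtain ⟨hε0, hεle⟩ := hε
  have hεhalf : ε ≤ 1/2 := hεle.trans (by linarith)
  have hεR : 0 < ε*R^2 := by positivity
  set s := t - (t₀ - ε*R^2) with hsdef
  have hs0 : 0 < s := by rw [hsdef]; linarith
  obtain ⟨hlow, hupp⟩ := hp t x (by linarith)
  rw [← hsdef] at hlow hupp
  have hs5 : s ≤ 5*R^2 := by
    have hh : ε*R^2 ≤ (1/2)*R^2 := mul_le_mul_of_nonneg_right hεhalf (sq_nonneg R)
    rw [hsdef]; linarith
  set η := ε₀/2 + ε with hη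
  have hη0 : 0 < η := by rw [hη]; linarith
  have hηε₀ : η ≤ ε₀ := by rw [hη]; linarith
  have hηge : ε₀/2 ≤ η := by rw [hη]; linarith
  have hRd : (0:ℝ) < R ^ (-(d:ℝ)) := Real.rpow_pos_of_pos hR0 _
  have hnd2 : -(d:ℝ)/2 ≤ 0 := by linarith
  refine ⟨?_, ?_, ?_⟩
  · -- part (i)
    intro hnot
    rcases not_and_or.1 hnot with h | h
    · push_neg at h
      have hs4 : R^2/4 ≤ s := by rw [hsdef]; linarith
      have h1 : Real.exp (-‖x - x₀‖^2 / (2*σu^2*s)) ≤ 1 := by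
        rw [Real.exp_le_one_iff]
        apply div_nonpos_of_nonpos_of_nonneg
        · simpa using sq_nonneg ‖x - x₀‖
        · positivity
      have h2 : s ^ (-(d:ℝ)/2) ≤ (R^2/4) ^ (-(d:ℝ)/2) :=
        Real.rpow_le_rpow_of_nonpos (by positivity) hs4 hnd2
      have h3 : (R^2/4) ^ (-(d:ℝ)/2) = 4^((d:ℝ)/2) * R^(-(d:ℝ)) := by
        rw [show R^2/4 = (4:ℝ)⁻¹ * R^2 by ring, aux_scale d (by norm_num) hR0]
        congr 1
        rw [Real.inv_rpow (by norm_num), ← Real.rpow_neg (by norm_num)]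
        congr 1; ring
      calc p t x ≤ Cu * s ^ (-(d:ℝ)/2) * Real.exp (-‖x - x₀‖^2 / (2*σu^2*s)) := hupp
        _ ≤ Cu * s ^ (-(d:ℝ)/2) * 1 := by
            apply mul_le_mul_of_nonneg_left h1 (by positivity)
        _ = Cu * s ^ (-(d:ℝ)/2) := mul_one _
        _ ≤ Cu * ((R^2/4) ^ (-(d:ℝ)/2)) := by
            apply mul_le_mul_of_nonneg_left h2 hCu.le
        _ = (Cu * 4^((d:ℝ)/2)) * R^(-(d:ℝ)) := by rw [h3]; ring
        _ ≤ C * R^(-(d:ℝ)) := by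
            apply mul_le_mul_of_nonneg_right ?_ hRd.le
            refine le_trans ?_ hCK1
            rw [hK1]
            exact mul_le_mul_of_nonneg_left (le_max_left _ _) hCu.le
    · push_neg at h
      set a := R^2/(8*σu^2) with ha
      have ha0 : 0 < a := by positivity
      have hxx : R^2/4 ≤ ‖x - x₀‖^2 := by
        have h' := mul_self_le_mul_self (by positivity : (0:ℝ) ≤ R/2) h.le
        calc R^2/4 = (R/2)*(R/2) := by ring
          _ ≤ ‖x - x₀‖*‖x - x₀‖ := h'
          _ = ‖x - x₀‖^2 := (sq ‖x - x₀‖).symm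
      have harg : -‖x - x₀‖^2 / (2*σu^2*s) ≤ -(a/s) := by
        have h8 : a/s = (R^2/4)/(2*σu^2*s) := by rw [ha]; field_simp; ring
        have h9 : (R^2/4)/(2*σu^2*s) ≤ ‖x - x₀‖^2/(2*σu^2*s) := by gcongr
        rw [show -‖x - x₀‖^2 / (2*σu^2*s) = -(‖x - x₀‖^2/(2*σu^2*s)) by ring, h8]
        linarith
      have hexp : Real.exp (-‖x - x₀‖^2/(2*σu^2*s)) ≤ (d.factorial:ℝ) * (s/a)^d := by
        refine le_trans (Real.exp_le_exp.2 ?_) (aux_exp_bound d ha0 hs0)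
        rw [show -‖x - x₀‖^2/(2*σu^2*s) = -‖x - x₀‖^2 / (2*σu^2*s) by ring]
        exact harg
      have e0 : s ^ (-(d:ℝ)/2) * s^d = s^((d:ℝ)/2) := by
        rw [← Real.rpow_natCast s d, ← Real.rpow_add hs0]; congr 1; ring
      have e2 : s ^ ((d:ℝ)/2) ≤ 5^((d:ℝ)/2) * R^((d:ℝ)) := by
        refine (Real.rpow_le_rpow hs0.le hs5 (by positivity)).trans_eq ?_
        rw [Real.mul_rpow (by norm_num) (by positivity)]
        congr 1
        rw [← Real.rpow_natCast R 2, ← Real.rpow_mul hR0.le]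
        congr 1; push_cast; ring
      have e4 : R^((d:ℝ)) * ((R^2)^d)⁻¹ = R^(-(d:ℝ)) := by
        rw [← pow_mul, ← Real.rpow_natCast R (2*d), ← Real.rpow_neg hR0.le,
          ← Real.rpow_add hR0]
        congr 1; push_cast; ring
      have key : s ^ (-(d:ℝ)/2) * ((d.factorial:ℝ) * (s/a)^d)
          ≤ ((d.factorial:ℝ) * (8*σu^2)^d * 5^((d:ℝ)/2)) * R^(-(d:ℝ)) := by
        have e1 : s ^ (-(d:ℝ)/2) * ((d.factorial:ℝ) * (s/a)^d)
            = (d.factorial:ℝ) * s^((d:ℝ)/2) * (a^d)⁻¹ := by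
          rw [div_pow, div_eq_mul_inv, ← e0]; ring
        have e3 : (a^d)⁻¹ = (8*σu^2)^d * ((R^2)^d)⁻¹ := by
          rw [ha, div_pow, inv_div, div_eq_mul_inv]
        rw [e1, e3]
        calc (d.factorial:ℝ) * s^((d:ℝ)/2) * ((8*σu^2)^d * ((R^2)^d)⁻¹)
            ≤ (d.factorial:ℝ) * (5^((d:ℝ)/2) * R^((d:ℝ))) * ((8*σu^2)^d * ((R^2)^d)⁻¹) := by
              apply mul_le_mul_of_nonneg_right _ (by positivity)
              exact mul_le_mul_of_nonneg_left e2 (by positivity)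
          _ = ((d.factorial:ℝ) * (8*σu^2)^d * 5^((d:ℝ)/2)) * (R^((d:ℝ)) * ((R^2)^d)⁻¹) := by
              ring
          _ = ((d.factorial:ℝ) * (8*σu^2)^d * 5^((d:ℝ)/2)) * R^(-(d:ℝ)) := by rw [e4]
      calc p t x ≤ Cu * s ^ (-(d:ℝ)/2) * Real.exp (-‖x - x₀‖^2 / (2*σu^2*s)) := hupp
        _ = Cu * (s ^ (-(d:ℝ)/2) * Real.exp (-‖x - x₀‖^2/(2*σu^2*s))) := by ring_nf
        _ ≤ Cu * (s ^ (-(d:ℝ)/2) * ((d.factorial:ℝ) * (s/a)^d)) := by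
            apply mul_le_mul_of_nonneg_left _ hCu.le
            exact mul_le_mul_of_nonneg_left hexp (by positivity)
        _ ≤ Cu * (((d.factorial:ℝ) * (8*σu^2)^d * 5^((d:ℝ)/2)) * R^(-(d:ℝ))) := by
            apply mul_le_mul_of_nonneg_left key hCu.le
        _ = (Cu * ((d.factorial:ℝ) * (8*σu^2)^d * 5^((d:ℝ)/2))) * R^(-(d:ℝ)) := by ring
        _ ≤ C * R^(-(d:ℝ)) := by
            apply mul_le_mul_of_nonneg_right _ hRd.le
            refine le_trans ?_ hCK1
            rw [hK1]
            exact mul_le_mul_of_nonneg_left (le_max_right _ _) hCu.le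
  · -- part (ii)
    intro htlow
    show C⁻¹ * R ^ (-(d:ℝ)) * (η ^ (-(d:ℝ)/2) * Real.exp (-1/(2*(σl/4)^2*η))) ≤ p t x
    have hsη : η*R^2 ≤ s := by rw [hsdef, hη]; linarith
    have hexp_eq : (-1/(2*(σl/4)^2*η)) = -((8/σl^2)/η) := by
      field_simp
      ring
    have h1 : Real.exp (-1/(2*(σl/4)^2*η)) ≤ Real.exp (-‖x - x₀‖^2 / (2*σl^2*s)) := by
      rw [hexp_eq, Real.exp_le_exp]
      have hnum : ‖x - x₀‖^2 ≤ 16*R^2 := by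
        have h' := mul_self_le_mul_self (norm_nonneg (x - x₀)) hx4
        calc ‖x - x₀‖^2 = ‖x - x₀‖*‖x - x₀‖ := sq ‖x - x₀‖
          _ ≤ (4*R)*(4*R) := h'
          _ = 16*R^2 := by ring
      have hstep : ‖x - x₀‖^2/(2*σl^2*s) ≤ (16*R^2)/(2*σl^2*(η*R^2)) := by
        gcongr
      have heq : (16*R^2)/(2*σl^2*(η*R^2)) = (8/σl^2)/η := by field_simp; ring
      rw [heq] at hstep
      rw [show -‖x - x₀‖^2 / (2*σl^2*s) = -(‖x - x₀‖^2/(2*σl^2*s)) by ring]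
      linarith
    have h2 : (5:ℝ)^(-(d:ℝ)/2) * R^(-(d:ℝ)) ≤ s ^ (-(d:ℝ)/2) := by
      rw [← aux_scale d (by norm_num) hR0]
      exact Real.rpow_le_rpow_of_nonpos hs0 hs5 hnd2
    have hrinv : ∀ {y:ℝ}, 0 < y → (y ^ (-(d:ℝ)/2))⁻¹ = y^((d:ℝ)/2) := fun {y} hy => by
      rw [show (-(d:ℝ)/2) = -((d:ℝ)/2) by ring, Real.rpow_neg hy.le, inv_inv]
    have hC2 : C⁻¹ * η ^ (-(d:ℝ)/2) ≤ Cl * 5^(-(d:ℝ)/2) := by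
      have hK2inv : K2⁻¹ = Cl * (5^((d:ℝ)/2))⁻¹ * (ε₀/2)^((d:ℝ)/2) := by
        rw [hK2, mul_inv, mul_inv, inv_inv, hrinv (by linarith : (0:ℝ) < ε₀/2)]
      have hCinv : C⁻¹ ≤ K2⁻¹ := inv_anti₀ hK2pos hCK2
      have hηb : η ^ (-(d:ℝ)/2) ≤ (ε₀/2) ^ (-(d:ℝ)/2) :=
        Real.rpow_le_rpow_of_nonpos (by linarith) hηge hnd2
      have h5 : (5:ℝ)^(-(d:ℝ)/2) = ((5:ℝ)^((d:ℝ)/2))⁻¹ := by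
        rw [show (-(d:ℝ)/2) = -((d:ℝ)/2) by ring, Real.rpow_neg (by norm_num : (0:ℝ) ≤ 5)]
      calc C⁻¹ * η ^ (-(d:ℝ)/2) ≤ K2⁻¹ * (ε₀/2) ^ (-(d:ℝ)/2) := by
            apply mul_le_mul hCinv hηb (by positivity) (by positivity)
        _ = Cl * (5^((d:ℝ)/2))⁻¹ * ((ε₀/2)^((d:ℝ)/2) * (ε₀/2) ^ (-(d:ℝ)/2)) := by
            rw [hK2inv]; ring
        _ = Cl * (5^((d:ℝ)/2))⁻¹ := by
            rw [← Real.rpow_add (by linarith : (0:ℝ) < ε₀/2),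
              show (d:ℝ)/2 + -(d:ℝ)/2 = 0 by ring, Real.rpow_zero, mul_one]
        _ = Cl * 5^(-(d:ℝ)/2) := by rw [h5]
    calc C⁻¹ * R ^ (-(d:ℝ)) * (η ^ (-(d:ℝ)/2) * Real.exp (-1/(2*(σl/4)^2*η)))
        = (C⁻¹ * η ^ (-(d:ℝ)/2)) * R ^ (-(d:ℝ)) * Real.exp (-1/(2*(σl/4)^2*η)) := by ring
      _ ≤ (Cl * 5^(-(d:ℝ)/2)) * R ^ (-(d:ℝ)) * Real.exp (-1/(2*(σl/4)^2*η)) := by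
          apply mul_le_mul_of_nonneg_right _ (Real.exp_pos _).le
          exact mul_le_mul_of_nonneg_right hC2 hRd.le
      _ = Cl * (5^(-(d:ℝ)/2) * R ^ (-(d:ℝ))) * Real.exp (-1/(2*(σl/4)^2*η)) := by ring
      _ ≤ Cl * s ^ (-(d:ℝ)/2) * Real.exp (-‖x - x₀‖^2 / (2*σl^2*s)) := by
          apply mul_le_mul
          · exact mul_le_mul_of_nonneg_left h2 hCl.le
          · exact h1
          · exact (Real.exp_pos _).le
          · positivity
      _ ≤ p t x := hlow
  · -- part (iii)
    intro htup hxR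
    show p t x ≤ C * R ^ (-(d:ℝ)) * (η ^ (-(d:ℝ)/2) * Real.exp (-1/(2*σu^2*η)))
    have hsη : s ≤ η*R^2 := by rw [hsdef, hη]; linarith
    set a := R^2/(2*σu^2) with ha
    have hcond : (d:ℝ)/2 * (η*R^2) ≤ a := by
      have hηd : η ≤ (σu^2*(d:ℝ))⁻¹ := hηε₀.trans hε₀d
      have h1 : (d:ℝ)/2 * (η*R^2) ≤ (d:ℝ)/2 * ((σu^2*(d:ℝ))⁻¹*R^2) :=
        mul_le_mul_of_nonneg_left (mul_le_mul_of_nonneg_right hηd (sq_nonneg R))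
          (by positivity)
      have h2 : (d:ℝ)/2 * ((σu^2*(d:ℝ))⁻¹*R^2) = R^2/(2*σu^2) := by
        field_simp
      rw [ha]
      linarith
    have hmono := aux_mono d (a := a) hs0 hsη hcond
    have harg1 : -‖x - x₀‖^2 / (2*σu^2*s) ≤ -(a/s) := by
      have h8 : a/s = R^2/(2*σu^2*s) := by rw [ha]; field_simp
      have hRx : R^2 ≤ ‖x - x₀‖^2 := by
        have h' := mul_self_le_mul_self hR0.le hxR.le
        calc R^2 = R*R := sq R
          _ ≤ ‖x - x₀‖*‖x - x₀‖ := h'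
          _ = ‖x - x₀‖^2 := (sq ‖x - x₀‖).symm
      have h9 : R^2/(2*σu^2*s) ≤ ‖x - x₀‖^2/(2*σu^2*s) := by gcongr
      rw [show -‖x - x₀‖^2 / (2*σu^2*s) = -(‖x - x₀‖^2/(2*σu^2*s)) by ring, h8]
      linarith
    have harg2 : -(a/(η*R^2)) = -1/(2*σu^2*η) := by
      rw [ha]; field_simp
    calc p t x ≤ Cu * s ^ (-(d:ℝ)/2) * Real.exp (-‖x - x₀‖^2 / (2*σu^2*s)) := hupp
      _ ≤ Cu * s ^ (-(d:ℝ)/2) * Real.exp (-(a/s)) := by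
          apply mul_le_mul_of_nonneg_left (Real.exp_le_exp.2 harg1) (by positivity)
      _ = Cu * (s ^ (-(d:ℝ)/2) * Real.exp (-(a/s))) := by ring
      _ ≤ Cu * ((η*R^2) ^ (-(d:ℝ)/2) * Real.exp (-(a/(η*R^2)))) := by
          apply mul_le_mul_of_nonneg_left hmono hCu.le
      _ = Cu * (η ^ (-(d:ℝ)/2) * R^(-(d:ℝ)) * Real.exp (-1/(2*σu^2*η))) := by
          rw [aux_scale d hη0 hR0, harg2]
      _ = Cu * R ^ (-(d:ℝ)) * (η ^ (-(d:ℝ)/2) * Real.exp (-1/(2*σu^2*η))) := by ring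
      _ ≤ C * R ^ (-(d:ℝ)) * (η ^ (-(d:ℝ)/2) * Real.exp (-1/(2*σu^2*η))) := by
          apply mul_le_mul_of_nonneg_right _ (by positivity)
          exact mul_le_mul_of_nonneg_right hCCu hRd.le
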